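/- arXiv:2105.05026 — 6 statements merged into one kernel-verified Lean document; each statement's English description precedes it below -/
import Mathlib

section
/- Let c ≥ 2 and let α, β⁺, β⁻: {−1,+1}^c → (0,∞) be positive penalty functions. Suppose Condition (C) holds: for every probability distribution P on {−1,+1}^c and all 1 ≤ p < q ≤ c, if Δ_p^+(P)Δ_q^-(P) − Δ_p^-(P)Δ_q^+(P) > 0 then φ_p^+(P)φ_q^-(P) − φ_p^-(P)φ_q^+(P) > 0, and if Δ_p^+(P)Δ_q^-(P) − Δ_p^-(P)Δ_q^+(P) < 0 then φ_p^+(P)φ_q^-(P) − φ_p^-(P)φ_q^+(P) < 0. Then there exists τ > 0 such that β⁺(y)·β⁻(y) = τ·α(y)² for every nontrivial y ∈ {−1,+1}^c. -/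
open scoped BigOperators

/-- The set of positive-label indices of `y ∈ {-1,+1}^c` (encoded as `Fin c → Bool`,
with `true ↦ +1` and `false ↦ -1`). -/
def Sp {c : ℕ} (y : Fin c → Bool) : Finset (Fin c) :=
  Finset.univ.filter (fun j => y j = true)

/-- The set of negative-label indices. -/
def Sm {c : ℕ} (y : Fin c → Bool) : Finset (Fin c) :=
  Finset.univ.filter (fun j => y j = false)

/-- `φ_j^+(P) = Σ_{y : y_j = +1} β(y) P(y)` (also used for `Δ_j^+` with `β = α`). -/
def phiP {c : ℕ} (β P : (Fin c → Bool) → ℝ) (j : Fin c) : ℝ :=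
  ∑ y ∈ Finset.univ.filter (fun y : Fin c → Bool => y j = true), β y * P y

/-- `φ_j^-(P) = Σ_{y : y_j = -1} β(y) P(y)` (also used for `Δ_j^-` with `β = α`). -/
def phiM {c : ℕ} (β P : (Fin c → Bool) → ℝ) (j : Fin c) : ℝ :=
  ∑ y ∈ Finset.univ.filter (fun y : Fin c → Bool => y j = false), β y * P y

lemma two_point_sum {c : ℕ} (y z : Fin c → Bool) (hyz : y ≠ z)
    (β : (Fin c → Bool) → ℝ) (a b : ℝ) (s : Finset (Fin c → Bool)) :
    ∑ y' ∈ s, β y' * (if y' = y then a else if y' = z then b else 0) =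
      (if y ∈ s then β y * a else 0) + (if z ∈ s then β z * b else 0) := by
  have h : ∀ y' ∈ s, β y' * (if y' = y then a else if y' = z then b else 0) =
      (if y' = y then β y * a else 0) + (if y' = z then β z * b else 0) := by
    intro y' _
    by_cases h1 : y' = y
    · subst h1; simp [hyz]
    · by_cases h2 : y' = z <;> simp [h1, h2, Ne.symm hyz]
  rw [Finset.sum_congr rfl h, Finset.sum_add_distrib,
    Finset.sum_ite_eq' s y, Finset.sum_ite_eq' s z]

lemma phiP_two {c : ℕ} (y z : Fin c → Bool) (hyz : y ≠ z)
    (β : (Fin c → Bool) → ℝ) (a b : ℝ) (j : Fin c) :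
    phiP β (fun y' => if y' = y then a else if y' = z then b else 0) j =
      (if y j = true then β y * a else 0) + (if z j = true then β z * b else 0) := by
  unfold phiP
  rw [two_point_sum y z hyz]
  simp [Finset.mem_filter]

lemma phiM_two {c : ℕ} (y z : Fin c → Bool) (hyz : y ≠ z)
    (β : (Fin c → Bool) → ℝ) (a b : ℝ) (j : Fin c) :
    phiM β (fun y' => if y' = y then a else if y' = z then b else 0) j =
      (if y j = false then β y * a else 0) + (if z j = false then β z * b else 0) := by
  unfold phiM
  rw [two_point_sum y z hyz]
  simp [Finset.mem_filter]

lemma quad_div (X X' Y Y' u v d : ℝ) (hd : d ≠ 0) :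
    X * (u / d) * (X' * (u / d)) - Y * (v / d) * (Y' * (v / d))
      = (X * X' * u ^ 2 - Y * Y' * v ^ 2) / d ^ 2 := by
  field_simp

section Key

variable {c : ℕ} {α βp βm : (Fin c → Bool) → ℝ}

lemma key_le
    (hα : ∀ y, 0 < α y) (hβp : ∀ y, 0 < βp y) (hβm : ∀ y, 0 < βm y)
    (hC : ∀ P : (Fin c → Bool) → ℝ, (∀ y, 0 ≤ P y) → (∑ y, P y) = 1 →
      ∀ p q : Fin c, p < q →
        (0 < phiP α P p * phiM α P q - phiM α P p * phiP α P q →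
          0 < phiP βp P p * phiM βm P q - phiM βm P p * phiP βp P q) ∧
        (phiP α P p * phiM α P q - phiM α P p * phiP α P q < 0 →
          phiP βp P p * phiM βm P q - phiM βm P p * phiP βp P q < 0))
    (y z : Fin c → Bool) (p q : Fin c)
    (hyp : y p = true) (hzp : z p = false) (hyq : y q = false) (hzq : z q = true) :
    βp y * βm y * (α z) ^ 2 ≤ βp z * βm z * (α y) ^ 2 := by
  by_contra hlt
  push_neg at hlt
  have hA0 : 0 < α y := hα y
  have hB0 : 0 < α z := hα z
  have hCy0 : 0 < βp y * βm y := mul_pos (hβp y) (hβm y)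
  have hCz0 : 0 < βp z * βm z := mul_pos (hβp z) (hβm z)
  obtain ⟨s, hs_def⟩ : ∃ s : ℝ,
      s = (βp z * βm z * α y ^ 2 + βp y * βm y * α z ^ 2) / (2 * (βp y * βm y) * α y ^ 2) :=
    ⟨_, rfl⟩
  have hs : 0 < s := by rw [hs_def]; positivity
  obtain ⟨w, hw_def⟩ : ∃ w : ℝ, w = Real.sqrt s := ⟨_, rfl⟩
  have hw : 0 < w := by rw [hw_def]; exact Real.sqrt_pos.mpr hs
  have hw2 : w ^ 2 = s := by rw [hw_def]; exact Real.sq_sqrt hs.le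
  obtain ⟨d, hd_def⟩ : ∃ d : ℝ, d = w + 1 := ⟨_, rfl⟩
  have hd : 0 < d := by rw [hd_def]; positivity
  have hyz : y ≠ z := by
    intro h; rw [h, hzp] at hyp; exact absurd hyp (by simp)
  have hpq : p ≠ q := by
    intro h; rw [h, hyq] at hyp; exact absurd hyp (by simp)
  set P : (Fin c → Bool) → ℝ := fun y' => if y' = y then w / d else if y' = z then 1 / d else 0
    with hP_def
  have hPnn : ∀ y', 0 ≤ P y' := by
    intro y'
    simp only [hP_def]
    split_ifs <;> positivity
  have hsum : (∑ y', P y') = 1 := by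
    have h := two_point_sum y z hyz (fun _ => 1) (w / d) (1 / d) Finset.univ
    simp only [one_mul, Finset.mem_univ, if_true] at h
    rw [hP_def, h, ← add_div, ← hd_def]
    exact div_self hd.ne'
  have e1 : phiP α P p = α y * (w / d) := by
    rw [hP_def, phiP_two y z hyz]; simp [hyp, hzp]
  have e2 : phiM α P q = α y * (w / d) := by
    rw [hP_def, phiM_two y z hyz]; simp [hyq, hzq]
  have e3 : phiM α P p = α z * (1 / d) := by
    rw [hP_def, phiM_two y z hyz]; simp [hyp, hzp]
  have e4 : phiP α P q = α z * (1 / d) := by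
    rw [hP_def, phiP_two y z hyz]; simp [hyq, hzq]
  have f1 : phiP βp P p = βp y * (w / d) := by
    rw [hP_def, phiP_two y z hyz]; simp [hyp, hzp]
  have f2 : phiM βm P q = βm y * (w / d) := by
    rw [hP_def, phiM_two y z hyz]; simp [hyq, hzq]
  have f3 : phiM βm P p = βm z * (1 / d) := by
    rw [hP_def, phiM_two y z hyz]; simp [hyp, hzp]
  have f4 : phiP βp P q = βp z * (1 / d) := by
    rw [hP_def, phiP_two y z hyz]; simp [hyq, hzq]
  have h1 : α y ^ 2 * s < α z ^ 2 := by
    rw [hs_def, ← mul_div_assoc, div_lt_iff₀ (by positivity)]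
    nlinarith [mul_lt_mul_of_pos_right hlt (pow_pos hA0 2)]
  have h2 : βp z * βm z < βp y * βm y * s := by
    rw [hs_def, ← mul_div_assoc, lt_div_iff₀ (by positivity)]
    nlinarith [mul_lt_mul_of_pos_left hlt hCy0]
  have hΔ : α y * (w / d) * (α y * (w / d)) - α z * (1 / d) * (α z * (1 / d)) < 0 := by
    rw [quad_div _ _ _ _ _ _ _ hd.ne']
    apply div_neg_of_neg_of_pos _ (by positivity)
    rw [hw2, one_pow, mul_one]
    rw [pow_two, pow_two] at h1
    linarith [h1]
  have hφ : 0 < βp y * (w / d) * (βm y * (w / d)) - βm z * (1 / d) * (βp z * (1 / d)) := by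
    rw [quad_div _ _ _ _ _ _ _ hd.ne']
    apply div_pos _ (by positivity)
    rw [hw2, one_pow, mul_one, mul_comm (βm z) (βp z)]
    linarith [h2]
  rcases lt_or_gt_of_ne hpq with hlt' | hgt'
  · have := (hC P hPnn hsum p q hlt').2 (by rw [e1, e2, e3, e4]; exact hΔ)
    rw [f1, f2, f3, f4] at this
    linarith [this, hφ]
  · have := (hC P hPnn hsum q p hgt').1 (by rw [e1, e2, e3, e4]; linarith [hΔ])
    rw [f1, f2, f3, f4] at this
    have h' : βp z * (1 / d) * (βm z * (1 / d)) = βm z * (1 / d) * (βp z * (1 / d)) := by ring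
    have h'' : βm y * (w / d) * (βp y * (w / d)) = βp y * (w / d) * (βm y * (w / d)) := by ring
    rw [h', h''] at this
    linarith [this, hφ]

lemma key_eq
    (hα : ∀ y, 0 < α y) (hβp : ∀ y, 0 < βp y) (hβm : ∀ y, 0 < βm y)
    (hC : ∀ P : (Fin c → Bool) → ℝ, (∀ y, 0 ≤ P y) → (∑ y, P y) = 1 →
      ∀ p q : Fin c, p < q →
        (0 < phiP α P p * phiM α P q - phiM α P p * phiP α P q →
          0 < phiP βp P p * phiM βm P q - phiM βm P p * phiP βp P q) ∧
        (phiP α P p * phiM α P q - phiM α P p * phiP α P q < 0 →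
          phiP βp P p * phiM βm P q - phiM βm P p * phiP βp P q < 0))
    (y z : Fin c → Bool) (p q : Fin c)
    (hyp : y p = true) (hzp : z p = false) (hyq : y q = false) (hzq : z q = true) :
    βp y * βm y / (α y) ^ 2 = βp z * βm z / (α z) ^ 2 := by
  have h1 := key_le hα hβp hβm hC y z p q hyp hzp hyq hzq
  have h2 := key_le hα hβp hβm hC z y q p hzq hyq hzp hyp
  rw [div_eq_div_iff (ne_of_gt (pow_pos (hα y) 2)) (ne_of_gt (pow_pos (hα z) 2))]
  linarith

lemma ratio_eq
    (hα : ∀ y, 0 < α y) (hβp : ∀ y, 0 < βp y) (hβm : ∀ y, 0 < βm y)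
    (hC : ∀ P : (Fin c → Bool) → ℝ, (∀ y, 0 ≤ P y) → (∑ y, P y) = 1 →
      ∀ p q : Fin c, p < q →
        (0 < phiP α P p * phiM α P q - phiM α P p * phiP α P q →
          0 < phiP βp P p * phiM βm P q - phiM βm P p * phiP βp P q) ∧
        (phiP α P p * phiM α P q - phiM α P p * phiP α P q < 0 →
          phiP βp P p * phiM βm P q - phiM βm P p * phiP βp P q < 0))
    (u v : Fin c → Bool)
    (hu1 : (Sp u).Nonempty) (hu2 : (Sm u).Nonempty)
    (hv1 : (Sp v).Nonempty) (hv2 : (Sm v).Nonempty) :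
    βp u * βm u / (α u) ^ 2 = βp v * βm v / (α v) ^ 2 := by
  obtain ⟨pu, hpu⟩ := hu1
  obtain ⟨qu, hqu⟩ := hu2
  obtain ⟨pv, hpv⟩ := hv1
  obtain ⟨qv, hqv⟩ := hv2
  simp only [Sp, Sm, Finset.mem_filter, Finset.mem_univ, true_and] at hpu hqu hpv hqv
  by_cases h1 : ∃ p, u p = true ∧ v p = false
  · by_cases h2 : ∃ q, u q = false ∧ v q = true
    · obtain ⟨p, hp1, hp2⟩ := h1
      obtain ⟨q, hq1, hq2⟩ := h2
      exact key_eq hα hβp hβm hC u v p q hp1 hp2 hq1 hq2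
    · -- here v ≤ u : (v j = true → u j = true) and (u j = false → v j = false)
      push_neg at h2
      have hle : ∀ j, u j = false → v j = false := by
        intro j hj
        cases h : v j
        · rfl
        · exact absurd h (h2 j hj)
      have hle2 : ∀ j, v j = true → u j = true := by
        intro j hj
        cases h : u j
        · exact absurd hj (hle j h ▸ (by simp [hle j h]))
        · rfl
      have e1 : βp v * βm v / (α v) ^ 2
          = βp (fun j => !(v j)) * βm (fun j => !(v j)) / (α (fun j => !(v j))) ^ 2 :=
        key_eq hα hβp hβm hC v (fun j => !(v j)) pv qv hpv (by simp [hpv]) hqv (by simp [hqv])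
      have e2 : βp (fun j => !(v j)) * βm (fun j => !(v j)) / (α (fun j => !(v j))) ^ 2
          = βp u * βm u / (α u) ^ 2 := by
        refine key_eq hα hβp hβm hC _ u qu pv ?_ hqu ?_ (hle2 pv hpv)
        · simp [hle qu hqu]
        · simp [hpv]
      rw [e1, e2]
  · -- here u ≤ v : (u j = true → v j = true)
    push_neg at h1
    have hle : ∀ j, u j = true → v j = true := by
      intro j hj
      cases h : v j
      · exact absurd h (h1 j hj)
      · rfl
    by_cases h2 : ∃ q, u q = false ∧ v q = true
    · have huqv : u qv = false := by
        cases h : u qv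
        · rfl
        · rw [hle qv h] at hqv; exact absurd hqv (by simp)
      have e1 : βp u * βm u / (α u) ^ 2
          = βp (fun j => !(u j)) * βm (fun j => !(u j)) / (α (fun j => !(u j))) ^ 2 :=
        key_eq hα hβp hβm hC u (fun j => !(u j)) pu qu hpu (by simp [hpu]) hqu (by simp [hqu])
      have e2 : βp (fun j => !(u j)) * βm (fun j => !(u j)) / (α (fun j => !(u j))) ^ 2
          = βp v * βm v / (α v) ^ 2 := by
        refine key_eq hα hβp hβm hC _ v qv pu ?_ hqv ?_ (hle pu hpu)
        · simp [huqv]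
        · simp [hpu]
      rw [e1, e2]
    · push_neg at h2
      have huv : u = v := by
        funext j
        cases h : u j
        · cases h' : v j
          · rfl
          · exact absurd h' (h2 j h)
        · exact (hle j h).symm
      rw [huv]

end Key

theorem stmt8 (c : ℕ) (hc : 2 ≤ c)
    (α βp βm : (Fin c → Bool) → ℝ)
    (hα : ∀ y, 0 < α y) (hβp : ∀ y, 0 < βp y) (hβm : ∀ y, 0 < βm y)
    (hC : ∀ P : (Fin c → Bool) → ℝ, (∀ y, 0 ≤ P y) → (∑ y, P y) = 1 →
      ∀ p q : Fin c, p < q →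
        (0 < phiP α P p * phiM α P q - phiM α P p * phiP α P q →
          0 < phiP βp P p * phiM βm P q - phiM βm P p * phiP βp P q) ∧
        (phiP α P p * phiM α P q - phiM α P p * phiP α P q < 0 →
          phiP βp P p * phiM βm P q - phiM βm P p * phiP βp P q < 0)) :
    ∃ τ : ℝ, 0 < τ ∧ ∀ y : Fin c → Bool,
      (Sp y).Nonempty → (Sm y).Nonempty → βp y * βm y = τ * (α y) ^ 2 := by
  have h0 : (0 : ℕ) < c := by omega
  have h1 : (1 : ℕ) < c := by omega
  set y₀ : Fin c → Bool := fun j => decide ((j : ℕ) = 0) with hy₀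
  have hy₀p : (Sp y₀).Nonempty := ⟨⟨0, h0⟩, by simp [Sp, hy₀]⟩
  have hy₀m : (Sm y₀).Nonempty := ⟨⟨1, h1⟩, by simp [Sm, hy₀]⟩
  refine ⟨βp y₀ * βm y₀ / (α y₀) ^ 2,
    div_pos (mul_pos (hβp y₀) (hβm y₀)) (pow_pos (hα y₀) 2), ?_⟩
  intro y hSp hSm
  have h := ratio_eq hα hβp hβm hC y y₀ hSp hSm hy₀p hy₀m
  rw [← h, div_mul_cancel₀]
  exact ne_of_gt (pow_pos (hα y) 2)
end

section
/- Let c ≥ 2 and let α, β⁺, β⁻: {−1,+1}^c → (0,∞) be positive penalty functions. Then the following are equivalent: (i) Condition (C): for every probability distribution P on {−1,+1}^c and all 1 ≤ p < q ≤ c, if Δ_p^+(P)Δ_q^-(P) − Δ_p^-(P)Δ_q^+(P) > 0 then φ_p^+(P)φ_q^-(P) − φ_p^-(P)φ_q^+(P) > 0, and if Δ_p^+(P)Δ_q^-(P) − Δ_p^-(P)Δ_q^+(P) < 0 then φ_p^+(P)φ_q^-(P) − φ_p^-(P)φ_q^+(P) < 0; (ii) for every probability distribution P on {−1,+1}^c,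 every global minimizer over ℝ^c of the conditional surrogate risk f ↦ Σ_y P(y)·L_u(f,y) with base loss ℓ(z) = (max{0, 1−z})² is also a global minimizer over ℝ^c of the conditional general partial ranking risk f ↦ Σ_y P(y)·L_gpr(f,y). -/
open scoped BigOperators

/-- The sign value of a Boolean label: `true ↦ +1`, `false ↦ -1`. -/
def toSign (b : Bool) : ℝ := if b then 1 else -1

/-- The general reweighted univariate surrogate loss `L_u`. -/
noncomputable def Lu {c : ℕ} (βp βm : (Fin c → Bool) → ℝ) (ℓ : ℝ → ℝ)
    (v : Fin c → ℝ) (y : Fin c → Bool) : ℝ :=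
  ∑ j, (if y j then βp y else βm y) * ℓ (toSign (y j) * v j)

/-- The general partial ranking loss `L_gpr`. -/
noncomputable def Lgpr {c : ℕ} (α : (Fin c → Bool) → ℝ) (v : Fin c → ℝ)
    (y : Fin c → Bool) : ℝ :=
  α y * ∑ p ∈ Sp y, ∑ q ∈ Sm y,
    ((if v p < v q then (1 : ℝ) else 0) + (1 / 2) * (if v p = v q then (1 : ℝ) else 0))

/-- The conditional surrogate risk. -/
noncomputable def riskU {c : ℕ} (βp βm : (Fin c → Bool) → ℝ) (ℓ : ℝ → ℝ)
    (P : (Fin c → Bool) → ℝ) (f : Fin c → ℝ) : ℝ :=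
  ∑ y, P y * Lu βp βm ℓ f y

/-- The conditional general partial ranking risk. -/
noncomputable def riskGpr {c : ℕ} (α : (Fin c → Bool) → ℝ)
    (P : (Fin c → Bool) → ℝ) (f : Fin c → ℝ) : ℝ :=
  ∑ y, P y * Lgpr α f y

noncomputable def sqh (z : ℝ) : ℝ := (max 0 (1 - z)) ^ 2

lemma sqh_nonneg (z : ℝ) : 0 ≤ sqh z := by unfold sqh; positivity

lemma sqh_of_le_one {z : ℝ} (h : z ≤ 1) : sqh z = (1 - z) ^ 2 := by
  unfold sqh; rw [max_eq_right (by linarith)]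

lemma sqh_of_one_le {z : ℝ} (h : 1 ≤ z) : sqh z = 0 := by
  unfold sqh; rw [max_eq_left (by linarith)]; norm_num

lemma one_le_of_sqh_eq_zero {z : ℝ} (h : sqh z ≤ 0) : 1 ≤ z := by
  by_contra hz
  push_neg at hz
  rw [sqh_of_le_one hz.le] at h
  nlinarith

lemma sqh_tangent (w z : ℝ) (hw : w ≤ 1) :
    (1 - w) ^ 2 - 2 * (1 - w) * (z - w) ≤ sqh z := by
  rcases le_or_gt z 1 with h | h
  · rw [sqh_of_le_one h]; nlinarith [sq_nonneg (w - z)]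
  · rw [sqh_of_one_le h.le]; nlinarith

lemma sqh_tangent_strict (w z : ℝ) (hw : w < 1) (hz : z ≠ w) :
    (1 - w) ^ 2 - 2 * (1 - w) * (z - w) < sqh z := by
  rcases le_or_gt z 1 with h | h
  · rw [sqh_of_le_one h]
    have hne : w - z ≠ 0 := sub_ne_zero.2 (fun e => hz (by linarith))
    have : (w - z) ^ 2 > 0 := lt_of_le_of_ne (sq_nonneg _) (Ne.symm (pow_ne_zero 2 hne))
    nlinarith
  · rw [sqh_of_one_le h.le]; nlinarith

lemma coord_min {a b : ℝ} (ha : 0 ≤ a) (hb : 0 ≤ b) (hab : 0 < a + b) (t : ℝ) :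
    a * sqh ((a - b) / (a + b)) + b * sqh (-((a - b) / (a + b))) ≤
      a * sqh t + b * sqh (-t) := by
  set w := (a - b) / (a + b) with hwdef
  have hw1 : w ≤ 1 := by rw [hwdef, div_le_one hab]; linarith
  have hw2 : -1 ≤ w := by rw [hwdef, le_div_iff₀ hab]; linarith
  have key : a * (1 - w) = b * (1 + w) := by
    rw [hwdef]; field_simp; ring
  have e1 : sqh w = (1 - w) ^ 2 := sqh_of_le_one hw1
  have e2 : sqh (-w) = (1 + w) ^ 2 := by
    rw [sqh_of_le_one (by linarith)]; ring
  have T1 := mul_le_mul_of_nonneg_left (sqh_tangent w t hw1) ha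
  have T2 := mul_le_mul_of_nonneg_left (sqh_tangent (-w) (-t) (by linarith)) hb
  have key2 : 2 * (t - w) * (a * (1 - w)) = 2 * (t - w) * (b * (1 + w)) := by rw [key]
  rw [e1, e2]
  nlinarith [key2, T1, T2]

lemma coord_unique {a b t : ℝ} (ha : 0 < a) (hb : 0 < b)
    (hle : a * sqh t + b * sqh (-t) ≤
      a * sqh ((a - b) / (a + b)) + b * sqh (-((a - b) / (a + b)))) :
    t = (a - b) / (a + b) := by
  by_contra hne
  set w := (a - b) / (a + b) with hwdef
  have hab : 0 < a + b := by linarith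
  have hw1 : w < 1 := by rw [hwdef, div_lt_one hab]; linarith
  have hw2 : -1 < w := by rw [hwdef, lt_div_iff₀ hab]; linarith
  have key : a * (1 - w) = b * (1 + w) := by rw [hwdef]; field_simp; ring
  have e1 : sqh w = (1 - w) ^ 2 := sqh_of_le_one hw1.le
  have e2 : sqh (-w) = (1 + w) ^ 2 := by
    rw [sqh_of_le_one (by linarith)]; ring
  have T1 := mul_lt_mul_of_pos_left (sqh_tangent_strict w t hw1 hne) ha
  have T2 := mul_lt_mul_of_pos_left
    (sqh_tangent_strict (-w) (-t) (by linarith) (fun e => hne (by linarith [neg_injective e]))) hb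
  have key2 : 2 * (t - w) * (a * (1 - w)) = 2 * (t - w) * (b * (1 + w)) := by rw [key]
  rw [e1, e2] at hle
  nlinarith [key2, T1, T2]

/-- Comparison of minimizing coordinates. -/
lemma coord_comp {a b a' b' t t' : ℝ} (ha : 0 ≤ a) (hb : 0 ≤ b) (ha' : 0 ≤ a') (hb' : 0 ≤ b')
    (hab : 0 < a + b) (hab' : 0 < a' + b')
    (hmt : ∀ s, a * sqh t + b * sqh (-t) ≤ a * sqh s + b * sqh (-s))
    (hmt' : ∀ s, a' * sqh t' + b' * sqh (-t') ≤ a' * sqh s + b' * sqh (-s))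
    (hdet : b * a' < a * b') : t' < t := by
  have hA : 0 < a := by
    rcases ha.lt_or_eq with h | h
    · exact h
    · exfalso; nlinarith [mul_nonneg hb ha']
  have hB' : 0 < b' := by
    rcases hb'.lt_or_eq with h | h
    · exact h
    · exfalso; nlinarith [mul_nonneg hb ha']
  rcases hb.lt_or_eq with hBpos | hB0
  · -- b > 0 : t is the unique interior minimizer
    have ht : t = (a - b) / (a + b) := coord_unique hA hBpos (hmt _)
    rcases ha'.lt_or_eq with hApos' | hA0'
    · have ht' : t' = (a' - b') / (a' + b') := coord_unique hApos' hB' (hmt' _)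
      rw [ht, ht', div_lt_div_iff₀ hab' hab]
      nlinarith
    · -- a' = 0 : t' ≤ -1 < t
      have h1 := hmt' (-1)
      rw [← hA0'] at h1
      simp only [zero_mul, zero_add, neg_neg] at h1
      have h2 : sqh (-t') ≤ 0 := by
        have := sqh_of_one_le (le_refl 1)
        nlinarith [sqh_nonneg (-t'), this]
      have ht' : t' ≤ -1 := by linarith [one_le_of_sqh_eq_zero h2]
      have : (-1 : ℝ) < t := by
        rw [ht, lt_div_iff₀ hab]; linarith
      linarith
  · -- b = 0 : t ≥ 1
    have h1 := hmt 1
    rw [← hB0] at h1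
    simp only [zero_mul, add_zero] at h1
    have h2 : sqh t ≤ 0 := by
      have := sqh_of_one_le (le_refl (1:ℝ))
      nlinarith [sqh_nonneg t]
    have ht : 1 ≤ t := one_le_of_sqh_eq_zero h2
    rcases ha'.lt_or_eq with hApos' | hA0'
    · have ht' : t' = (a' - b') / (a' + b') := coord_unique hApos' hB' (hmt' _)
      have : t' < 1 := by rw [ht', div_lt_one hab']; linarith
      linarith
    · have h1 := hmt' (-1)
      rw [← hA0'] at h1
      simp only [zero_mul, zero_add, neg_neg] at h1
      have h2 : sqh (-t') ≤ 0 := by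
        have := sqh_of_one_le (le_refl (1:ℝ))
        nlinarith [sqh_nonneg (-t')]
      have ht' : t' ≤ -1 := by linarith [one_le_of_sqh_eq_zero h2]
      linarith

open scoped BigOperators
-- auxiliary defs
noncomputable def Gf (u v : ℝ) : ℝ :=
  (if u < v then (1 : ℝ) else 0) + (1 / 2) * (if u = v then (1 : ℝ) else 0)

def Dpq {c : ℕ} (α P : (Fin c → Bool) → ℝ) (p q : Fin c) : ℝ :=
  ∑ y ∈ Finset.univ.filter (fun y : Fin c → Bool => y p = true ∧ y q = false), α y * P y

lemma Gf_nonneg (u v : ℝ) : 0 ≤ Gf u v := by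
  unfold Gf; split_ifs <;> norm_num

lemma Gf_le_one (u v : ℝ) : Gf u v ≤ 1 := by
  unfold Gf; split_ifs with h1 h2 <;> try norm_num
  · exact absurd h2 (ne_of_lt h1)

lemma Gf_add_swap (u v : ℝ) : Gf u v + Gf v u = 1 := by
  unfold Gf
  rcases lt_trichotomy u v with h | h | h
  · rw [if_pos h, if_neg (not_lt.2 h.le), if_neg (ne_of_lt h), if_neg (ne_of_gt h)]; norm_num
  · subst h; simp [lt_irrefl]; norm_num
  · rw [if_neg (not_lt.2 h.le), if_pos h, if_neg (ne_of_gt h), if_neg (ne_of_lt h)]; norm_num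

lemma Gf_eq_zero {u v : ℝ} (h : v < u) : Gf u v = 0 := by
  unfold Gf; rw [if_neg (not_lt.2 h.le), if_neg (ne_of_gt h)]; norm_num

lemma Gf_eq_one {u v : ℝ} (h : u < v) : Gf u v = 1 := by
  unfold Gf; rw [if_pos h, if_neg (ne_of_lt h)]; norm_num

lemma Gf_half_le {u v : ℝ} (h : u ≤ v) : 1 / 2 ≤ Gf u v := by
  rcases h.lt_or_eq with h | h
  · rw [Gf_eq_one h]; norm_num
  · unfold Gf; rw [if_pos h]; split_ifs <;> norm_num

lemma Gf_le_half {u v : ℝ} (h : v ≤ u) : Gf u v ≤ 1 / 2 := by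
  rcases h.lt_or_eq with h | h
  · rw [Gf_eq_zero h]; norm_num
  · unfold Gf; rw [if_neg (not_lt.2 h.le), if_pos h.symm]; norm_num

/-- Decomposition of the surrogate risk. -/
lemma riskU_eq {c : ℕ} (βp βm : (Fin c → Bool) → ℝ) (ℓ : ℝ → ℝ)
    (P : (Fin c → Bool) → ℝ) (f : Fin c → ℝ) :
    riskU βp βm ℓ P f =
      ∑ j, (phiP βp P j * ℓ (f j) + phiM βm P j * ℓ (-f j)) := by
  unfold riskU Lu phiP phiM
  simp only [Finset.mul_sum]
  rw [Finset.sum_comm]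
  refine Finset.sum_congr rfl (fun j _ => ?_)
  rw [← Finset.sum_filter_add_sum_filter_not Finset.univ (fun y => y j = true)]
  congr 1
  · rw [Finset.sum_mul]
    refine Finset.sum_congr rfl (fun y hy => ?_)
    simp only [Finset.mem_filter] at hy
    rw [hy.2]
    simp [toSign]
    ring
  · rw [Finset.sum_mul]
    refine Finset.sum_congr ?_ (fun y hy => ?_)
    · congr 1; ext y; simp [Bool.not_eq_true]
    · simp only [Finset.mem_filter, Bool.not_eq_true] at hy
      rw [hy.2]
      simp [toSign]
      ring

/-- Decomposition of the ranking risk. -/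
lemma riskGpr_eq {c : ℕ} (α P : (Fin c → Bool) → ℝ) (f : Fin c → ℝ) :
    riskGpr α P f = ∑ p, ∑ q, Dpq α P p q * Gf (f p) (f q) := by
  have claim1 : ∀ y, P y * Lgpr α f y =
      ∑ p, ∑ q, (if (y p = true ∧ y q = false) then α y * P y * Gf (f p) (f q) else 0) := by
    intro y
    have h1 : ∀ p : Fin c, (∑ q, if (y p = true ∧ y q = false)
          then α y * P y * Gf (f p) (f q) else 0)
        = if y p = true then (∑ q, if y q = false
          then α y * P y * Gf (f p) (f q) else 0) else 0 := by
      intro p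
      by_cases h : y p = true
      · simp only [h, true_and, if_true]
      · simp [h]
    simp only [h1, ← Finset.sum_filter]
    unfold Lgpr Sp Sm Gf
    simp only [Finset.mul_sum]
    refine Finset.sum_congr rfl fun p _ => Finset.sum_congr rfl fun q _ => by ring
  unfold riskGpr
  simp only [claim1]
  rw [Finset.sum_comm]
  refine Finset.sum_congr rfl fun p _ => ?_
  rw [Finset.sum_comm]
  refine Finset.sum_congr rfl fun q _ => ?_
  unfold Dpq
  rw [Finset.sum_mul, Finset.sum_filter]

lemma Dpq_sub {c : ℕ} (α P : (Fin c → Bool) → ℝ) (p q : Fin c) :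
    Dpq α P p q - Dpq α P q p = phiP α P p - phiP α P q := by
  unfold Dpq phiP
  rw [Finset.sum_filter, Finset.sum_filter, Finset.sum_filter, Finset.sum_filter,
    ← Finset.sum_sub_distrib, ← Finset.sum_sub_distrib]
  refine Finset.sum_congr rfl (fun y _ => ?_)
  cases hp : y p <;> cases hq : y q <;> simp [hp, hq]

-- extra lemmas to test (with axioms for previous parts)

lemma phiM_eq {c : ℕ} (β P : (Fin c → Bool) → ℝ) (j : Fin c) :
    phiM β P j = (∑ y, β y * P y) - phiP β P j := by
  unfold phiP phiM
  rw [← Finset.sum_filter_add_sum_filter_not Finset.univ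
    (fun y : Fin c → Bool => y j = true) (fun y => β y * P y)]
  have : (Finset.univ.filter (fun y : Fin c → Bool => ¬ y j = true))
      = Finset.univ.filter (fun y : Fin c → Bool => y j = false) := by
    ext y; simp [Bool.not_eq_true]
  rw [this]; ring

lemma exists_pos {c : ℕ} (P : (Fin c → Bool) → ℝ) (hP : ∀ y, 0 ≤ P y)
    (hPs : (∑ y, P y) = 1) : ∃ y, 0 < P y := by
  by_contra h
  push_neg at h
  have : (∑ y, P y) = 0 := Finset.sum_eq_zero fun y _ => le_antisymm (h y) (hP y)
  rw [this] at hPs; norm_num at hPs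

lemma T_pos {c : ℕ} (β P : (Fin c → Bool) → ℝ) (hβ : ∀ y, 0 < β y)
    (hP : ∀ y, 0 ≤ P y) (hPs : (∑ y, P y) = 1) : 0 < ∑ y, β y * P y := by
  obtain ⟨y₀, hy₀⟩ := exists_pos P hP hPs
  calc (0:ℝ) < β y₀ * P y₀ := mul_pos (hβ y₀) hy₀
    _ ≤ ∑ y, β y * P y := Finset.single_le_sum
        (fun y _ => mul_nonneg (hβ y).le (hP y)) (Finset.mem_univ y₀)

lemma ab_pos {c : ℕ} (βp βm P : (Fin c → Bool) → ℝ) (hβp : ∀ y, 0 < βp y)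
    (hβm : ∀ y, 0 < βm y) (hP : ∀ y, 0 ≤ P y) (hPs : (∑ y, P y) = 1) (j : Fin c) :
    0 < phiP βp P j + phiM βm P j := by
  obtain ⟨y₀, hy₀⟩ := exists_pos P hP hPs
  have key : phiP βp P j + phiM βm P j = ∑ y, (if y j then βp y else βm y) * P y := by
    unfold phiP phiM
    rw [← Finset.sum_filter_add_sum_filter_not Finset.univ
      (fun y : Fin c → Bool => y j = true) (fun y => (if y j then βp y else βm y) * P y)]
    congr 1
    · refine Finset.sum_congr rfl fun y hy => ?_
      simp only [Finset.mem_filter] at hy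
      rw [hy.2]; simp
    · refine Finset.sum_congr ?_ fun y hy => ?_
      · ext y; simp [Bool.not_eq_true]
      · simp only [Finset.mem_filter, Bool.not_eq_true] at hy
        rw [hy.2]; simp
  rw [key]
  have h0 : ∀ y ∈ Finset.univ, 0 ≤ (if y j then βp y else βm y) * P y := by
    intro y _
    refine mul_nonneg ?_ (hP y)
    split_ifs
    exacts [(hβp y).le, (hβm y).le]
  have hs := Finset.single_le_sum h0 (Finset.mem_univ y₀)
  have hpos : 0 < (if y₀ j then βp y₀ else βm y₀) * P y₀ := by
    refine mul_pos ?_ hy₀; split_ifs; exacts [hβp y₀, hβm y₀]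
  linarith

lemma term_le {e Gf' Gg : ℝ} (h0 : 0 ≤ Gg) (h1 : Gg ≤ 1)
    (hpos : 0 < e → Gf' = 0) (hneg : e < 0 → Gf' = 1) : e * Gf' ≤ e * Gg := by
  rcases lt_trichotomy e 0 with h | h | h
  · rw [hneg h]; exact mul_le_mul_of_nonpos_left h1 h.le
  · simp [h]
  · rw [hpos h]; simpa using mul_nonneg h.le h0

lemma sum_pair_lt {c : ℕ} (A B : Fin c → Fin c → ℝ)
    (hle : ∀ p q, A p q ≤ B p q) (p q : Fin c) (hst : A p q < B p q) :
    ∑ p', ∑ q', A p' q' < ∑ p', ∑ q', B p' q' :=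
  Finset.sum_lt_sum (fun p' _ => Finset.sum_le_sum fun q' _ => hle p' q')
    ⟨p, Finset.mem_univ p,
      Finset.sum_lt_sum (fun q' _ => hle p q') ⟨q, Finset.mem_univ q, hst⟩⟩

lemma two_riskGpr {c : ℕ} (α P : (Fin c → Bool) → ℝ) (h : Fin c → ℝ) :
    2 * riskGpr α P h =
      ∑ p, ∑ q, (Dpq α P q p + (phiP α P p - phiP α P q) * Gf (h p) (h q)) := by
  rw [riskGpr_eq]
  have swap : ∑ p, ∑ q, Dpq α P p q * Gf (h p) (h q)
      = ∑ p, ∑ q, Dpq α P q p * Gf (h q) (h p) := Finset.sum_comm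
  rw [two_mul]
  nth_rewrite 2 [swap]
  rw [← Finset.sum_add_distrib]
  refine Finset.sum_congr rfl fun p _ => ?_
  rw [← Finset.sum_add_distrib]
  refine Finset.sum_congr rfl fun q _ => ?_
  have h1 := Gf_add_swap (h p) (h q)
  have h2 := Dpq_sub α P p q
  linear_combination Gf (h p) (h q) * h2 + Dpq α P q p * h1

lemma phiP_nonneg {c : ℕ} (β P : (Fin c → Bool) → ℝ) (hβ : ∀ y, 0 < β y)
    (hP : ∀ y, 0 ≤ P y) (j : Fin c) : 0 ≤ phiP β P j :=
  Finset.sum_nonneg fun y _ => mul_nonneg (hβ y).le (hP y)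

lemma phiM_nonneg {c : ℕ} (β P : (Fin c → Bool) → ℝ) (hβ : ∀ y, 0 < β y)
    (hP : ∀ y, 0 ≤ P y) (j : Fin c) : 0 ≤ phiM β P j :=
  Finset.sum_nonneg fun y _ => mul_nonneg (hβ y).le (hP y)

lemma pos_factor {T x y : ℝ} (hT : 0 < T) (h : 0 < T * (x - y)) : y < x := by
  by_contra hc
  push_neg at hc
  nlinarith [mul_nonneg hT.le (sub_nonneg.2 hc)]


theorem stmt13 (c : ℕ) (hc : 2 ≤ c)
    (α βp βm : (Fin c → Bool) → ℝ)
    (hα : ∀ y, 0 < α y) (hβp : ∀ y, 0 < βp y) (hβm : ∀ y, 0 < βm y) :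
    (∀ P : (Fin c → Bool) → ℝ, (∀ y, 0 ≤ P y) → (∑ y, P y) = 1 →
        ∀ p q : Fin c, p < q →
          (0 < phiP α P p * phiM α P q - phiM α P p * phiP α P q →
            0 < phiP βp P p * phiM βm P q - phiM βm P p * phiP βp P q) ∧
          (phiP α P p * phiM α P q - phiM α P p * phiP α P q < 0 →
            phiP βp P p * phiM βm P q - phiM βm P p * phiP βp P q < 0)) ↔
      (∀ P : (Fin c → Bool) → ℝ, (∀ y, 0 ≤ P y) → (∑ y, P y) = 1 →
        ∀ f : Fin c → ℝ,
          (∀ g : Fin c → ℝ,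
              riskU βp βm (fun z => (max 0 (1 - z)) ^ 2) P f ≤
                riskU βp βm (fun z => (max 0 (1 - z)) ^ 2) P g) →
            ∀ g : Fin c → ℝ, riskGpr α P f ≤ riskGpr α P g) := by
  have hℓ : (fun z : ℝ => (max 0 (1 - z)) ^ 2) = sqh := rfl
  constructor
  · -- (C) implies consistency
    intro hC P hP hPs f hf g
    have hT : 0 < ∑ y, α y * P y := T_pos α P hα hP hPs
    have habpos : ∀ j, 0 < phiP βp P j + phiM βm P j :=
      fun j => ab_pos βp βm P hβp hβm hP hPs j
    -- coordinatewise minimality of f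
    have hcoord : ∀ j t, phiP βp P j * sqh (f j) + phiM βm P j * sqh (-f j) ≤
        phiP βp P j * sqh t + phiM βm P j * sqh (-t) := by
      intro j t
      have h := hf (Function.update f j t)
      rw [hℓ, riskU_eq, riskU_eq] at h
      rw [← Finset.sum_erase_add Finset.univ _ (Finset.mem_univ j),
          ← Finset.sum_erase_add Finset.univ _ (Finset.mem_univ j)] at h
      have heq : ∑ k ∈ Finset.univ.erase j,
            (phiP βp P k * sqh (Function.update f j t k) +
              phiM βm P k * sqh (-Function.update f j t k))
          = ∑ k ∈ Finset.univ.erase j,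
            (phiP βp P k * sqh (f k) + phiM βm P k * sqh (-f k)) := by
        refine Finset.sum_congr rfl fun k hk => ?_
        rw [Function.update_of_ne (Finset.ne_of_mem_erase hk)]
      rw [heq, Function.update_self] at h
      exact le_of_add_le_add_left h
    -- ranking order induced by the α-scores
    have horder : ∀ p q : Fin c, phiP α P q < phiP α P p → f q < f p := by
      intro p q hlt
      have hdet : 0 < phiP α P p * phiM α P q - phiM α P p * phiP α P q := by
        have h3 : phiP α P p * phiM α P q - phiM α P p * phiP α P q
            = (∑ y, α y * P y) * (phiP α P p - phiP α P q) := by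
          rw [phiM_eq, phiM_eq]; ring
        rw [h3]
        exact mul_pos hT (sub_pos.2 hlt)
      have hφ : 0 < phiP βp P p * phiM βm P q - phiM βm P p * phiP βp P q := by
        rcases lt_trichotomy p q with hpq | hpq | hpq
        · exact (hC P hP hPs p q hpq).1 hdet
        · exact absurd hlt (by rw [hpq]; exact lt_irrefl _)
        · have hdet' : phiP α P q * phiM α P p - phiM α P q * phiP α P p < 0 := by
            have h3 : phiP α P q * phiM α P p - phiM α P q * phiP α P p
                = (∑ y, α y * P y) * (phiP α P q - phiP α P p) := by
              rw [phiM_eq, phiM_eq]; ring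
            rw [h3]
            exact mul_neg_of_pos_of_neg hT (by linarith)
          have h4 := (hC P hP hPs q p hpq).2 hdet'
          linarith [h4]
      exact coord_comp (phiP_nonneg βp P hβp hP p) (phiM_nonneg βm P hβm hP p)
        (phiP_nonneg βp P hβp hP q) (phiM_nonneg βm P hβm hP q)
        (habpos p) (habpos q) (hcoord p) (hcoord q) (by linarith)
    -- compare ranking risks
    have hcomp : 2 * riskGpr α P f ≤ 2 * riskGpr α P g := by
      rw [two_riskGpr, two_riskGpr]
      refine Finset.sum_le_sum fun p _ => Finset.sum_le_sum fun q _ => ?_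
      refine (add_le_add_iff_left _).2 ?_
      refine term_le (Gf_nonneg _ _) (Gf_le_one _ _) ?_ ?_
      · intro h'; exact Gf_eq_zero (horder p q (by linarith))
      · intro h'; exact Gf_eq_one (horder q p (by linarith))
    linarith
  · -- consistency implies (C)
    intro hmin P hP hPs p q hpq
    have hT : 0 < ∑ y, α y * P y := T_pos α P hα hP hPs
    have habpos : ∀ j, 0 < phiP βp P j + phiM βm P j :=
      fun j => ab_pos βp βm P hβp hβm hP hPs j
    have hfmin : ∀ g, riskU βp βm (fun z => (max 0 (1 - z)) ^ 2) P
        (fun j => (phiP βp P j - phiM βm P j) / (phiP βp P j + phiM βm P j)) ≤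
        riskU βp βm (fun z => (max 0 (1 - z)) ^ 2) P g := by
      intro g
      rw [hℓ, riskU_eq, riskU_eq]
      refine Finset.sum_le_sum fun j _ => ?_
      exact coord_min (phiP_nonneg βp P hβp hP j) (phiM_nonneg βm P hβm hP j)
        (habpos j) (g j)
    have hgr := hmin P hP hPs _ hfmin (phiP α P)
    set fstar : Fin c → ℝ :=
      fun j => (phiP βp P j - phiM βm P j) / (phiP βp P j + phiM βm P j) with hfdef
    -- common ≤ part of the strict comparison
    have hterm : ∀ p' q' : Fin c,
        Dpq α P q' p' + (phiP α P p' - phiP α P q') * Gf (phiP α P p') (phiP α P q') ≤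
        Dpq α P q' p' + (phiP α P p' - phiP α P q') * Gf (fstar p') (fstar q') := by
      intro p' q'
      refine (add_le_add_iff_left _).2 ?_
      refine term_le (Gf_nonneg _ _) (Gf_le_one _ _) ?_ ?_
      · intro h'; exact Gf_eq_zero (by linarith)
      · intro h'; exact Gf_eq_one (by linarith)
    constructor
    · intro hdet
      by_contra hφ
      push_neg at hφ
      have hlt : phiP α P q < phiP α P p := by
        refine pos_factor hT ?_
        have h3 : (∑ y, α y * P y) * (phiP α P p - phiP α P q)
            = phiP α P p * phiM α P q - phiM α P p * phiP α P q := by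
          rw [phiM_eq, phiM_eq]; ring
        rw [h3]; exact hdet
      have hfs : fstar p ≤ fstar q := by
        rw [hfdef]
        dsimp only
        rw [div_le_div_iff₀ (habpos p) (habpos q)]
        nlinarith [hφ]
      have hstrict : 2 * riskGpr α P (phiP α P) < 2 * riskGpr α P fstar := by
        rw [two_riskGpr, two_riskGpr]
        refine sum_pair_lt _ _ hterm p q ?_
        have hG0 : Gf (phiP α P p) (phiP α P q) = 0 := Gf_eq_zero hlt
        have hGh : 1 / 2 ≤ Gf (fstar p) (fstar q) := Gf_half_le hfs
        have hepos : 0 < phiP α P p - phiP α P q := sub_pos.2 hlt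
        rw [hG0]
        refine (add_lt_add_iff_left _).2 ?_
        rw [mul_zero]
        exact mul_pos hepos (by linarith)
      rw [hfdef] at hgr
      linarith
    · intro hdet
      by_contra hφ
      push_neg at hφ
      have hlt : phiP α P p < phiP α P q := by
        refine pos_factor hT ?_
        have h3 : (∑ y, α y * P y) * (phiP α P q - phiP α P p)
            = -(phiP α P p * phiM α P q - phiM α P p * phiP α P q) := by
          rw [phiM_eq, phiM_eq]; ring
        rw [h3]; linarith
      have hfs : fstar q ≤ fstar p := by
        rw [hfdef]
        dsimp only
        rw [div_le_div_iff₀ (habpos q) (habpos p)]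
        nlinarith [hφ]
      have hstrict : 2 * riskGpr α P (phiP α P) < 2 * riskGpr α P fstar := by
        rw [two_riskGpr, two_riskGpr]
        refine sum_pair_lt _ _ hterm p q ?_
        have hG1 : Gf (phiP α P p) (phiP α P q) = 1 := Gf_eq_one hlt
        have hGh : Gf (fstar p) (fstar q) ≤ 1 / 2 := Gf_le_half hfs
        have heneg : phiP α P p - phiP α P q < 0 := sub_neg.2 hlt
        rw [hG1, mul_one]
        refine (add_lt_add_iff_left _).2 ?_
        have h5 := mul_le_mul_of_nonpos_left hGh heneg.le
        linarith
      rw [hfdef] at hgr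
      linarith
end

section
/- Let c ≥ 4. For nontrivial y ∈ {−1,+1}^c set α(y) = 1/(|S_y^+|·|S_y^-|) and β⁺(y) = β⁻(y) = 1/c (the penalties of the univariate loss L_{u1} and of the partial ranking loss). Then there is no τ > 0 such that β⁺(y)·β⁻(y) = τ·α(y)² for all nontrivial y ∈ {−1,+1}^c. -/
open scoped BigOperators

lemma Sp_card_lt {c k : ℕ} (hk : k < c) :
    (Sp (fun j : Fin c => decide ((j : ℕ) < k))).card = k := by
  have : Sp (fun j : Fin c => decide ((j : ℕ) < k)) = Finset.Iio (⟨k, hk⟩ : Fin c) := by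
    ext j
    simp [Sp, Finset.mem_Iio, Fin.lt_def]
  rw [this, Fin.card_Iio]

lemma Sm_card_lt {c k : ℕ} (hk : k < c) :
    (Sm (fun j : Fin c => decide ((j : ℕ) < k))).card = c - k := by
  have h1 := Sp_card_lt hk
  have h2 : (Sp (fun j : Fin c => decide ((j : ℕ) < k))).card
      + (Sm (fun j : Fin c => decide ((j : ℕ) < k))).card = c := by
    have heq : Sm (fun j : Fin c => decide ((j : ℕ) < k))
        = Finset.univ.filter (fun j : Fin c => ¬ (decide ((j : ℕ) < k) = true)) := by
      ext j; simp [Sm]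
    rw [Sp, heq, Finset.card_filter_add_card_filter_not, Finset.card_univ, Fintype.card_fin]
  omega

theorem stmt14 (c : ℕ) (hc : 4 ≤ c) :
    ¬ ∃ τ : ℝ, 0 < τ ∧ ∀ y : Fin c → Bool,
      (Sp y).Nonempty → (Sm y).Nonempty →
        (1 / (c : ℝ)) * (1 / (c : ℝ)) =
          τ * (1 / (((Sp y).card : ℝ) * ((Sm y).card : ℝ))) ^ 2 := by
  rintro ⟨τ, hτ, h⟩
  have h1lt : 1 < c := by omega
  have h2lt : 2 < c := by omega
  have hy1 := h (fun j : Fin c => decide ((j : ℕ) < 1))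
  have hy2 := h (fun j : Fin c => decide ((j : ℕ) < 2))
  have hSp1 := Sp_card_lt h1lt
  have hSm1 := Sm_card_lt h1lt
  have hSp2 := Sp_card_lt h2lt
  have hSm2 := Sm_card_lt h2lt
  have hne1p : (Sp (fun j : Fin c => decide ((j : ℕ) < 1))).Nonempty :=
    Finset.card_pos.mp (by rw [hSp1]; omega)
  have hne1m : (Sm (fun j : Fin c => decide ((j : ℕ) < 1))).Nonempty :=
    Finset.card_pos.mp (by rw [hSm1]; omega)
  have hne2p : (Sp (fun j : Fin c => decide ((j : ℕ) < 2))).Nonempty :=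
    Finset.card_pos.mp (by rw [hSp2]; omega)
  have hne2m : (Sm (fun j : Fin c => decide ((j : ℕ) < 2))).Nonempty :=
    Finset.card_pos.mp (by rw [hSm2]; omega)
  have e1 := hy1 hne1p hne1m
  have e2 := hy2 hne2p hne2m
  rw [hSp1, hSm1] at e1
  rw [hSp2, hSm2] at e2
  have hc1 : ((c - 1 : ℕ) : ℝ) = (c : ℝ) - 1 := by
    push_cast [Nat.cast_sub (by omega : 1 ≤ c)]; ring
  have hc2 : ((c - 2 : ℕ) : ℝ) = (c : ℝ) - 2 := by
    push_cast [Nat.cast_sub (by omega : 2 ≤ c)]; ring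
  rw [hc1] at e1
  rw [hc2] at e2
  have hcR : (4 : ℝ) ≤ (c : ℝ) := by exact_mod_cast hc
  have hc1pos : (0:ℝ) < (c:ℝ) - 1 := by linarith
  have hc2pos : (0:ℝ) < (c:ℝ) - 2 := by linarith
  have e3 : τ * (1 / ((1:ℝ) * ((c:ℝ) - 1))) ^ 2 = τ * (1 / ((2:ℝ) * ((c:ℝ) - 2))) ^ 2 := by
    push_cast at e1 e2
    linarith [e1, e2]
  field_simp at e3
  nlinarith [e3, mul_pos (by linarith : (0:ℝ) < (c:ℝ) - 3) (by linarith : (0:ℝ) < 3 * (c:ℝ) - 5)]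
end

section
/- Let c ≥ 4. For nontrivial y ∈ {−1,+1}^c set α(y) = 1/(|S_y^+|·|S_y^-|), β⁺(y) = 1/|S_y^+| and β⁻(y) = 1/|S_y^-| (the penalties of the reweighted univariate loss L_{u3} and of the partial ranking loss). Then there is no τ > 0 such that β⁺(y)·β⁻(y) = τ·α(y)² for all nontrivial y ∈ {−1,+1}^c. -/
open scoped BigOperators

lemma Sp_lt {c : ℕ} (b : Fin c) :
    Sp (fun j => decide (j < b)) = Finset.Iio b := by
  ext j; simp [Sp]

lemma Sm_lt {c : ℕ} (b : Fin c) :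
    Sm (fun j => decide (j < b)) = Finset.Ici b := by
  ext j; simp [Sm]

theorem stmt15 (c : ℕ) (hc : 4 ≤ c) :
    ¬ ∃ τ : ℝ, 0 < τ ∧ ∀ y : Fin c → Bool,
      (Sp y).Nonempty → (Sm y).Nonempty →
        (1 / ((Sp y).card : ℝ)) * (1 / ((Sm y).card : ℝ)) =
          τ * (1 / (((Sp y).card : ℝ) * ((Sm y).card : ℝ))) ^ 2 := by
  rintro ⟨τ, hτ, h⟩
  set b1 : Fin c := ⟨1, by omega⟩
  set b2 : Fin c := ⟨2, by omega⟩
  have h1 := h (fun j => decide (j < b1))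
  have h2 := h (fun j => decide (j < b2))
  rw [Sp_lt, Sm_lt] at h1
  rw [Sp_lt, Sm_lt] at h2
  simp only [Fin.card_Iio, Fin.card_Ici] at h1 h2
  have h1' := h1 ⟨⟨0, by omega⟩, by simp [Finset.mem_Iio, Fin.lt_def, b1]⟩ ⟨b1, Finset.mem_Ici.mpr le_rfl⟩
  have h2' := h2 ⟨⟨0, by omega⟩, by simp [Finset.mem_Iio, Fin.lt_def, b2]⟩ ⟨b2, Finset.mem_Ici.mpr le_rfl⟩
  norm_num at h1' h2'
  -- h1' : 1/1 * 1/(c-1) = τ * (1/(1*(c-1)))^2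
  -- h2' : 1/2 * 1/(c-2) = τ * (1/(2*(c-2)))^2
  have hc1 : ((c - 1 : ℕ) : ℝ) = (c : ℝ) - 1 := by
    push_cast [Nat.cast_sub (by omega : 1 ≤ c)]; ring
  have hc2 : ((c - 2 : ℕ) : ℝ) = (c : ℝ) - 2 := by
    push_cast [Nat.cast_sub (by omega : 2 ≤ c)]; ring
  rw [hc1] at h1'
  rw [hc2] at h2'
  have hcr : (4 : ℝ) ≤ (c : ℝ) := by exact_mod_cast hc
  have hne1 : (c : ℝ) - 1 ≠ 0 := by nlinarith
  have hne2 : (c : ℝ) - 2 ≠ 0 := by nlinarith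
  have e1 : τ = (c : ℝ) - 1 := by
    field_simp at h1'
    nlinarith [sq_nonneg ((c : ℝ) - 1)]
  have e2 : τ = 2 * ((c : ℝ) - 2) := by
    field_simp at h2'
    nlinarith [sq_nonneg ((c : ℝ) - 2)]
  rw [e1] at e2
  nlinarith
end

section
/- Let c ≥ 4. For nontrivial y ∈ {−1,+1}^c set α(y) = 1/(|S_y^+|·|S_y^-|) and β⁺(y) = β⁻(y) = 1/min{|S_y^+|,|S_y^-|} (the penalties of the reweighted univariate loss L_{u4} and of the partial ranking loss). Then there is no τ > 0 such that β⁺(y)·β⁻(y) = τ·α(y)² for all nontrivial y ∈ {−1,+1}^c. -/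
open scoped BigOperators

lemma card_Sm {c : ℕ} (y : Fin c → Bool) : (Sm y).card = c - (Sp y).card := by
  have h : Sm y = (Sp y)ᶜ := by
    ext j; simp [Sp, Sm]
  rw [h, Finset.card_compl, Fintype.card_fin]

theorem stmt16 (c : ℕ) (hc : 4 ≤ c) :
    ¬ ∃ τ : ℝ, 0 < τ ∧ ∀ y : Fin c → Bool,
      (Sp y).Nonempty → (Sm y).Nonempty →
        (1 / ((min (Sp y).card (Sm y).card : ℕ) : ℝ)) *
            (1 / ((min (Sp y).card (Sm y).card : ℕ) : ℝ)) =
          τ * (1 / (((Sp y).card : ℝ) * ((Sm y).card : ℝ))) ^ 2 := by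
  rintro ⟨τ, hτ, H⟩
  set y1 : Fin c → Bool := fun j => decide (j.val = 0) with hy1
  set y2 : Fin c → Bool := fun j => decide (j.val < 2) with hy2
  have hSp1 : (Sp y1).card = 1 := by
    have : Sp y1 = {(⟨0, by omega⟩ : Fin c)} := by
      ext j; simp [Sp, hy1, Fin.ext_iff]
    rw [this, Finset.card_singleton]
  have hSp2 : (Sp y2).card = 2 := by
    have : Sp y2 = {(⟨0, by omega⟩ : Fin c), (⟨1, by omega⟩ : Fin c)} := by
      ext j; simp [Sp, hy2, Fin.ext_iff]; omega
    rw [this]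
    rw [Finset.card_insert_of_notMem (by simp [Fin.ext_iff]), Finset.card_singleton]
  have hSm1 : (Sm y1).card = c - 1 := by rw [card_Sm, hSp1]
  have hSm2 : (Sm y2).card = c - 2 := by rw [card_Sm, hSp2]
  have h1 := H y1 (Finset.card_pos.mp (by omega)) (Finset.card_pos.mp (by omega))
  have h2 := H y2 (Finset.card_pos.mp (by omega)) (Finset.card_pos.mp (by omega))
  rw [hSp1, hSm1, min_eq_left (by omega)] at h1
  rw [hSp2, hSm2, min_eq_left (by omega)] at h2
  have hc1 : ((c - 1 : ℕ) : ℝ) = (c : ℝ) - 1 := by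
    rw [Nat.cast_sub (by omega)]; norm_num
  have hc2 : ((c - 2 : ℕ) : ℝ) = (c : ℝ) - 2 := by
    rw [Nat.cast_sub (by omega)]; norm_num
  rw [hc1] at h1
  rw [hc2] at h2
  have hcR : (4 : ℝ) ≤ (c : ℝ) := by exact_mod_cast hc
  have h1' : (c : ℝ) - 1 ≠ 0 := by linarith
  have h2' : (c : ℝ) - 2 ≠ 0 := by linarith
  field_simp at h1 h2
  nlinarith [h1, h2, hcR, hτ]
end

section
/- Let c = 2 and let α, β⁺, β⁻: {−1,+1}² → (0,∞) be arbitrary positive penalty functions. Then there exists a probability distribution P on {−1,+1}² such that some global minimizer over ℝ² of the conditional surrogate risk f ↦ Σ_{y∈{−1,+1}²} P(y)·L_u(f,y) with hinge base loss ℓ(z) = max{0, 1−z} is not a global minimizer over ℝ² of the conditional general partial ranking risk f ↦ Σ_{y∈{−1,+1}²} P(y)·L_gpr(f,y). -/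
open scoped BigOperators

private lemma sum_fn2 (F : (Fin 2 → Bool) → ℝ) :
    ∑ y, F y = F ![true,true] + F ![true,false] + F ![false,true] + F ![false,false] := by
  rw [show (Finset.univ : Finset (Fin 2 → Bool)) =
      {![true,true], ![true,false], ![false,true], ![false,false]} from by decide]
  rw [Finset.sum_insert (by decide), Finset.sum_insert (by decide),
      Finset.sum_insert (by decide), Finset.sum_singleton]
  ring

private lemma hinge_min (A B t : ℝ) (hB : 0 ≤ B) (hAB : B ≤ A) :
    2*B ≤ A * max 0 (1-t) + B * max 0 (1+t) := by
  have h1 := le_max_right (0:ℝ) (1-t)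
  have h2 := le_max_right (0:ℝ) (1+t)
  have h0 := le_max_left (0:ℝ) (1-t)
  nlinarith

theorem stmt17 (α βp βm : (Fin 2 → Bool) → ℝ)
    (hα : ∀ y, 0 < α y) (hβp : ∀ y, 0 < βp y) (hβm : ∀ y, 0 < βm y) :
    ∃ P : (Fin 2 → Bool) → ℝ, (∀ y, 0 ≤ P y) ∧ (∑ y, P y) = 1 ∧
      ∃ f : Fin 2 → ℝ,
        (∀ g : Fin 2 → ℝ,
            riskU βp βm (fun z => max 0 (1 - z)) P f ≤
              riskU βp βm (fun z => max 0 (1 - z)) P g) ∧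
          ¬ (∀ g : Fin 2 → ℝ, riskGpr α P f ≤ riskGpr α P g) := by
  have hpTT := hβp ![true,true]
  have hpTF := hβp ![true,false]
  have hpFT := hβp ![false,true]
  have hmTF := hβm ![true,false]
  have hmFT := hβm ![false,true]
  have haTF := hα ![true,false]
  have haFT := hα ![false,true]
  set δ : ℝ := min (1/4) (βp ![true,true] / (4 * βm ![false,true])) with hδdef
  set ε : ℝ := min (min (1/4) (βp ![true,true] / (4 * βm ![true,false])))
    (δ * α ![false,true] / (2 * α ![true,false])) with hεdef
  have hδ0 : 0 < δ := lt_min (by norm_num) (div_pos hpTT (by linarith))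
  have hε0 : 0 < ε := lt_min (lt_min (by norm_num) (div_pos hpTT (by linarith)))
    (div_pos (mul_pos hδ0 haFT) (by linarith))
  have hδ4 : δ ≤ 1/4 := min_le_left _ _
  have hε4 : ε ≤ 1/4 := le_trans (min_le_left _ _) (min_le_left _ _)
  have hδb : δ * βm ![false,true] ≤ βp ![true,true] / 4 := by
    have h := min_le_right (1/4 : ℝ) (βp ![true,true] / (4 * βm ![false,true]))
    rw [← hδdef, le_div_iff₀ (by linarith)] at h
    nlinarith
  have hεb : ε * βm ![true,false] ≤ βp ![true,true] / 4 := by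
    have h : ε ≤ βp ![true,true] / (4 * βm ![true,false]) :=
      le_trans (min_le_left _ _) (min_le_right _ _)
    rw [le_div_iff₀ (by linarith)] at h
    nlinarith
  have hεα : ε * α ![true,false] < δ * α ![false,true] := by
    have h : ε ≤ δ * α ![false,true] / (2 * α ![true,false]) := min_le_right _ _
    rw [le_div_iff₀ (by linarith)] at h
    nlinarith [mul_pos hε0 haTF]
  have hBA0 : δ * βm ![false,true] ≤ (1 - ε - δ) * βp ![true,true] + ε * βp ![true,false] := by
    nlinarith [mul_le_mul_of_nonneg_right (show (1:ℝ)/2 ≤ 1 - ε - δ by linarith) hpTT.le,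
      mul_pos hε0 hpTF]
  have hBA1 : ε * βm ![true,false] ≤ (1 - ε - δ) * βp ![true,true] + δ * βp ![false,true] := by
    nlinarith [mul_le_mul_of_nonneg_right (show (1:ℝ)/2 ≤ 1 - ε - δ by linarith) hpTT.le,
      mul_pos hδ0 hpFT]
  refine ⟨fun y => if y 0 then (if y 1 then 1 - ε - δ else ε) else (if y 1 then δ else 0),
    ?_, ?_, fun _ => 1, ?_, ?_⟩
  · intro y
    by_cases h0 : y 0 <;> by_cases h1 : y 1 <;> simp [h0, h1] <;> linarith
  · rw [sum_fn2]; norm_num; ring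
  · intro g
    have key0 := hinge_min ((1 - ε - δ) * βp ![true,true] + ε * βp ![true,false])
      (δ * βm ![false,true]) (g 0) (mul_nonneg hδ0.le hmFT.le) hBA0
    have key1 := hinge_min ((1 - ε - δ) * βp ![true,true] + δ * βp ![false,true])
      (ε * βm ![true,false]) (g 1) (mul_nonneg hε0.le hmTF.le) hBA1
    rw [riskU, riskU, sum_fn2, sum_fn2]
    simp only [Lu, toSign, Fin.sum_univ_two, Matrix.cons_val_zero, Matrix.cons_val_one,
      Matrix.head_cons, if_true, if_false]
    norm_num
    nlinarith [key0, key1]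
  · push_neg
    refine ⟨![0, 1], ?_⟩
    rw [riskGpr, riskGpr, sum_fn2, sum_fn2]
    simp only [Lgpr, Sp, Sm, Finset.sum_filter, Fin.sum_univ_two, Matrix.cons_val_zero,
      Matrix.cons_val_one, Matrix.head_cons]
    norm_num
    nlinarith [hεα, haTF, haFT, hε0, hδ0]
end
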